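/- Multivariate deformed Vandermonde formula: let 0 < τ₂ < τ₁ be reals, let n, k be naturals with k ≥ 1, and let x₁, …, x_{k+1} be real numbers. Then [x₁ + ⋯ + x_{k+1}]_n = Σ M(n; r₁,…,r_k) · τ₁^{Σ_{j=1}^{k} r_j(z_j − (n − s_j))} · τ₂^{Σ_{j=1}^{k} (n − s_j)(x_j − r_j)} · ∏_{j=1}^{k+1} [x_j]_{r_j}, where the sum runs over all tuples (r₁,…,r_k) of naturals with r₁ + ⋯ + r_k ≤ n, and where s_j = r₁ + ⋯ + r_j, r_{k+1} = n − s_k, and z_j = x_{j+1} + ⋯ + x_{k+1}. -/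

import Mathlib

open Finset

noncomputable def dnum (τ₁ τ₂ x : ℝ) : ℝ := (τ₁ ^ x - τ₂ ^ x) / (τ₁ - τ₂)

noncomputable def dfac (τ₁ τ₂ : ℝ) (r : ℕ) : ℝ :=
  ∏ j ∈ Finset.range r, dnum τ₁ τ₂ ((j : ℝ) + 1)

noncomputable def dfall (τ₁ τ₂ x : ℝ) (r : ℕ) : ℝ :=
  ∏ i ∈ Finset.range r, dnum τ₁ τ₂ (x - (i : ℝ))

noncomputable def dbinom (τ₁ τ₂ x : ℝ) (r : ℕ) : ℝ := dfall τ₁ τ₂ x r / dfac τ₁ τ₂ r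

noncomputable def dmulti (τ₁ τ₂ x : ℝ) {k : ℕ} (r : Fin k → ℕ) : ℝ :=
  dfall τ₁ τ₂ x (∑ j, r j) / ∏ j, dfac τ₁ τ₂ (r j)

lemma dnum_comm (τ₁ τ₂ x : ℝ) : dnum τ₁ τ₂ x = dnum τ₂ τ₁ x := by
  unfold dnum
  rw [← neg_div_neg_eq]; congr 1 <;> ring

lemma dnum_zero (τ₁ τ₂ : ℝ) : dnum τ₁ τ₂ 0 = 0 := by
  simp [dnum]

lemma dnum_pos {τ₁ τ₂ : ℝ} (h2 : 0 < τ₂) (h : τ₂ < τ₁) {x : ℝ} (hx : 0 < x) :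
    0 < dnum τ₁ τ₂ x := by
  have := Real.rpow_lt_rpow (le_of_lt h2) h hx
  exact div_pos (by linarith) (by linarith)

lemma dnum_add {τ₁ τ₂ : ℝ} (h1 : 0 < τ₁) (h2 : 0 < τ₂) (a b : ℝ) :
    dnum τ₁ τ₂ (a + b) = τ₁ ^ b * dnum τ₁ τ₂ a + τ₂ ^ a * dnum τ₁ τ₂ b := by
  unfold dnum
  rw [Real.rpow_add h1, Real.rpow_add h2]
  ring

lemma dfac_succ (τ₁ τ₂ : ℝ) (r : ℕ) :
    dfac τ₁ τ₂ (r + 1) = dfac τ₁ τ₂ r * dnum τ₁ τ₂ ((r : ℝ) + 1) := by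
  unfold dfac; rw [Finset.prod_range_succ]

lemma dfac_pos {τ₁ τ₂ : ℝ} (h2 : 0 < τ₂) (h : τ₂ < τ₁) (r : ℕ) : 0 < dfac τ₁ τ₂ r := by
  unfold dfac
  exact Finset.prod_pos fun j _ => dnum_pos h2 h (by positivity)

lemma dfall_succ (τ₁ τ₂ x : ℝ) (r : ℕ) :
    dfall τ₁ τ₂ x (r + 1) = dfall τ₁ τ₂ x r * dnum τ₁ τ₂ (x - (r : ℝ)) := by
  unfold dfall; rw [Finset.prod_range_succ]

lemma dfac_eq_dfall {τ₁ τ₂ : ℝ} (n s : ℕ) (h : s ≤ n) :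
    dfac τ₁ τ₂ n = dfac τ₁ τ₂ (n - s) * dfall τ₁ τ₂ (n : ℝ) s := by
  induction s with
  | zero => simp [dfall]
  | succ s ih =>
      have hs : s ≤ n := Nat.le_of_succ_le h
      rw [dfall_succ, ih hs]
      have h1 : n - s = (n - (s+1)) + 1 := by omega
      rw [h1, dfac_succ]
      have h2 : ((n - (s+1) : ℕ) : ℝ) + 1 = (n : ℝ) - (s : ℝ) := by
        have : ((n - (s+1) : ℕ) : ℝ) = (n : ℝ) - (s : ℝ) - 1 := by
          push_cast [Nat.cast_sub h]; ring
        rw [this]; ring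
      rw [h2]; ring

lemma filt_split {M : Type*} [AddCommMonoid M] (m : ℕ) (F : Fin (m+1) → M)
    (p : ℕ → Prop) [DecidablePred p] :
    ∑ i ∈ univ.filter (fun i : Fin (m+1) => p i.val), F i =
      (∑ i ∈ univ.filter (fun i : Fin m => p i.val), F i.castSucc) +
        (if p m then F (Fin.last m) else 0) := by
  rw [Finset.sum_filter, Finset.sum_filter, Fin.sum_univ_castSucc]
  simp

lemma tri_split {M : Type*} [AddCommMonoid M] {m : ℕ} (F : Fin m → M) (j : Fin m) :
    ∑ i, F i =
      (∑ i ∈ univ.filter (fun i : Fin m => (i : ℕ) < (j : ℕ)), F i) + F j +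
        ∑ i ∈ univ.filter (fun i : Fin m => (j : ℕ) < (i : ℕ)), F i := by
  have key : ∀ i : Fin m, F i =
      (if (i : ℕ) < (j : ℕ) then F i else 0) + (if i = j then F i else 0) +
        (if (j : ℕ) < (i : ℕ) then F i else 0) := by
    intro i
    rcases lt_trichotomy (i : ℕ) (j : ℕ) with h | h | h
    · have : i ≠ j := fun he => by simp [he] at h
      simp [h, this, Nat.lt_asymm h]
    · have : i = j := Fin.ext h
      simp [this]
    · have : i ≠ j := fun he => by simp [he] at h
      simp [h, this, Nat.lt_asymm h]
  rw [Finset.sum_congr rfl fun i _ => key i]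
  rw [Finset.sum_add_distrib, Finset.sum_add_distrib, Finset.sum_ite_eq' univ j F,
      ← Finset.sum_filter, ← Finset.sum_filter]
  simp

lemma multiadd_fin {τ₁ τ₂ : ℝ} (h1 : 0 < τ₁) (h2 : 0 < τ₂) :
    ∀ (m : ℕ) (a : Fin m → ℝ),
    dnum τ₁ τ₂ (∑ i, a i) =
      ∑ j : Fin m, τ₁ ^ (∑ i ∈ univ.filter (fun i : Fin m => (j : ℕ) < (i : ℕ)), a i) *
        τ₂ ^ (∑ i ∈ univ.filter (fun i : Fin m => (i : ℕ) < (j : ℕ)), a i) *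
        dnum τ₁ τ₂ (a j) := by
  intro m
  induction m with
  | zero => intro a; simp [dnum_zero]
  | succ m ih =>
      intro a
      rw [Fin.sum_univ_castSucc, dnum_add h1 h2, ih (fun i => a i.castSucc)]
      rw [Fin.sum_univ_castSucc (f := fun j => τ₁ ^ (∑ i ∈ univ.filter (fun i : Fin (m+1) => (j : ℕ) < (i : ℕ)), a i) *
        τ₂ ^ (∑ i ∈ univ.filter (fun i : Fin (m+1) => (i : ℕ) < (j : ℕ)), a i) *
        dnum τ₁ τ₂ (a j))]
      congr 1
      · rw [Finset.mul_sum]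
        refine Finset.sum_congr rfl fun j _ => ?_
        rw [filt_split m a (fun t => (j.castSucc : ℕ) < t),
            filt_split m a (fun t => t < (j.castSucc : ℕ))]
        have hj : (j : ℕ) < m := j.isLt
        simp only [Fin.coe_castSucc, if_pos hj, if_neg (by omega : ¬ m < (j : ℕ)), add_zero,
          Real.rpow_add h1]
        ring
      · rw [filt_split m a (fun t => (Fin.last m : ℕ) < t),
            filt_split m a (fun t => t < (Fin.last m : ℕ))]
        simp only [Fin.val_last, Fin.coe_castSucc]
        rw [Finset.filter_false_of_mem (fun i _ => by omega),
            Finset.filter_true_of_mem (fun i _ => i.isLt)]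
        simp

lemma multiadd_fin' {τ₁ τ₂ : ℝ} (h1 : 0 < τ₁) (h2 : 0 < τ₂) (m : ℕ) (a : Fin m → ℝ) :
    dnum τ₁ τ₂ (∑ i, a i) =
      ∑ j : Fin m, τ₁ ^ (∑ i ∈ univ.filter (fun i : Fin m => (i : ℕ) < (j : ℕ)), a i) *
        τ₂ ^ (∑ i ∈ univ.filter (fun i : Fin m => (j : ℕ) < (i : ℕ)), a i) *
        dnum τ₁ τ₂ (a j) := by
  rw [dnum_comm, multiadd_fin h2 h1 m a]
  exact Finset.sum_congr rfl fun j _ => by rw [dnum_comm]; ring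

section Defs

variable (τ₁ τ₂ : ℝ) {m : ℕ}

def Tn (ρ : Fin m → ℕ) (j : Fin m) : ℕ := ∑ i ∈ univ.filter (fun i : Fin m => (j : ℕ) < (i : ℕ)), ρ i

def Zx (x : Fin m → ℝ) (j : Fin m) : ℝ := ∑ i ∈ univ.filter (fun i : Fin m => (j : ℕ) < (i : ℕ)), x i

def Aexp (x : Fin m → ℝ) (ρ : Fin m → ℕ) : ℝ := ∑ j, (ρ j : ℝ) * (Zx x j - (Tn ρ j : ℝ))

def Bexp (x : Fin m → ℝ) (ρ : Fin m → ℕ) : ℝ := ∑ j, (Tn ρ j : ℝ) * (x j - (ρ j : ℝ))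

noncomputable def dterm (x : Fin m → ℝ) (n : ℕ) (ρ : Fin m → ℕ) : ℝ :=
  (dfac τ₁ τ₂ n / ∏ j, dfac τ₁ τ₂ (ρ j)) * τ₁ ^ Aexp x ρ * τ₂ ^ Bexp x ρ *
    ∏ j, dfall τ₁ τ₂ (x j) (ρ j)

def inc (j : Fin m) (ρ : Fin m → ℕ) : Fin m → ℕ := Function.update ρ j (ρ j + 1)

end Defs

section IncLemmas

variable {m : ℕ} (j : Fin m) (ρ : Fin m → ℕ)

lemma inc_apply_self : inc j ρ j = ρ j + 1 := by simp [inc]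

lemma inc_apply_ne {i : Fin m} (h : i ≠ j) : inc j ρ i = ρ i := by
  simp [inc, Function.update_of_ne h]

lemma sum_inc : ∑ i, inc j ρ i = (∑ i, ρ i) + 1 := by
  unfold inc
  rw [Finset.sum_update_of_mem (Finset.mem_univ j)]
  rw [← Finset.add_sum_erase univ ρ (Finset.mem_univ j), Finset.sdiff_singleton_eq_erase]
  ring

lemma Tn_inc_lt {i : Fin m} (h : (i : ℕ) < (j : ℕ)) : Tn (inc j ρ) i = Tn ρ i + 1 := by
  unfold Tn inc
  have hj : j ∈ univ.filter (fun t : Fin m => (i : ℕ) < (t : ℕ)) := by simp only [Finset.mem_filter, Finset.mem_univ, true_and]; exact h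
  rw [Finset.sum_update_of_mem hj, ← Finset.add_sum_erase _ ρ hj, Finset.sdiff_singleton_eq_erase]
  ring

lemma Tn_inc_ge {i : Fin m} (h : ¬ ((i : ℕ) < (j : ℕ))) : Tn (inc j ρ) i = Tn ρ i := by
  unfold Tn inc
  have hj : j ∉ univ.filter (fun t : Fin m => (i : ℕ) < (t : ℕ)) := by simp only [Finset.mem_filter, Finset.mem_univ, true_and]; exact h
  rw [Finset.sum_update_of_notMem hj]

end IncLemmas

section ExpLemmas

variable {m : ℕ} (x : Fin m → ℝ) (ρ : Fin m → ℕ) (j : Fin m)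

lemma Aexp_inc :
    Aexp x (inc j ρ) = Aexp x ρ + (Zx x j - (Tn ρ j : ℝ)) -
      ∑ i ∈ univ.filter (fun i : Fin m => (i : ℕ) < (j : ℕ)), (ρ i : ℝ) := by
  unfold Aexp
  rw [tri_split (fun i => ((inc j ρ) i : ℝ) * (Zx x i - (Tn (inc j ρ) i : ℝ))) j,
      tri_split (fun i => (ρ i : ℝ) * (Zx x i - (Tn ρ i : ℝ))) j]
  have h1 : ∀ i ∈ univ.filter (fun i : Fin m => (i : ℕ) < (j : ℕ)),
      ((inc j ρ) i : ℝ) * (Zx x i - (Tn (inc j ρ) i : ℝ)) =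
        (ρ i : ℝ) * (Zx x i - (Tn ρ i : ℝ)) - (ρ i : ℝ) := by
    intro i hi
    simp only [Finset.mem_filter, Finset.mem_univ, true_and] at hi
    rw [inc_apply_ne j ρ (by intro he; rw [he] at hi; omega), Tn_inc_lt j ρ hi]
    push_cast; ring
  have h2 : ∀ i ∈ univ.filter (fun i : Fin m => (j : ℕ) < (i : ℕ)),
      ((inc j ρ) i : ℝ) * (Zx x i - (Tn (inc j ρ) i : ℝ)) =
        (ρ i : ℝ) * (Zx x i - (Tn ρ i : ℝ)) := by
    intro i hi
    simp only [Finset.mem_filter, Finset.mem_univ, true_and] at hi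
    rw [inc_apply_ne j ρ (by intro he; rw [he] at hi; omega), Tn_inc_ge j ρ (by omega)]
  rw [Finset.sum_congr rfl h1, Finset.sum_congr rfl h2, Finset.sum_sub_distrib,
      inc_apply_self, Tn_inc_ge j ρ (by omega)]
  push_cast; ring

lemma Bexp_inc :
    Bexp x (inc j ρ) = Bexp x ρ +
      (∑ i ∈ univ.filter (fun i : Fin m => (i : ℕ) < (j : ℕ)), (x i - (ρ i : ℝ))) -
        (Tn ρ j : ℝ) := by
  unfold Bexp
  rw [tri_split (fun i => ((Tn (inc j ρ) i : ℝ)) * (x i - ((inc j ρ) i : ℝ))) j,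
      tri_split (fun i => ((Tn ρ i : ℝ)) * (x i - (ρ i : ℝ))) j]
  have h1 : ∀ i ∈ univ.filter (fun i : Fin m => (i : ℕ) < (j : ℕ)),
      ((Tn (inc j ρ) i : ℝ)) * (x i - ((inc j ρ) i : ℝ)) =
        ((Tn ρ i : ℝ)) * (x i - (ρ i : ℝ)) + (x i - (ρ i : ℝ)) := by
    intro i hi
    simp only [Finset.mem_filter, Finset.mem_univ, true_and] at hi
    rw [inc_apply_ne j ρ (by intro he; rw [he] at hi; omega), Tn_inc_lt j ρ hi]
    push_cast; ring
  have h2 : ∀ i ∈ univ.filter (fun i : Fin m => (j : ℕ) < (i : ℕ)),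
      ((Tn (inc j ρ) i : ℝ)) * (x i - ((inc j ρ) i : ℝ)) =
        ((Tn ρ i : ℝ)) * (x i - (ρ i : ℝ)) := by
    intro i hi
    simp only [Finset.mem_filter, Finset.mem_univ, true_and] at hi
    rw [inc_apply_ne j ρ (by intro he; rw [he] at hi; omega), Tn_inc_ge j ρ (by omega)]
  rw [Finset.sum_congr rfl h1, Finset.sum_congr rfl h2, Finset.sum_add_distrib,
      inc_apply_self, Tn_inc_ge j ρ (by omega)]
  push_cast; ring

end ExpLemmas

noncomputable def fterm (τ₁ τ₂ : ℝ) {m : ℕ} (x : Fin m → ℝ) (n : ℕ) (ρ : Fin m → ℕ)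
    (j : Fin m) : ℝ :=
  dterm τ₁ τ₂ x n ρ *
    (τ₁ ^ (Zx x j - (Tn ρ j : ℝ)) *
      τ₂ ^ (∑ i ∈ univ.filter (fun i : Fin m => (i : ℕ) < (j : ℕ)), (x i - (ρ i : ℝ))) *
      dnum τ₁ τ₂ (x j - (ρ j : ℝ)))

noncomputable def hterm (τ₁ τ₂ : ℝ) {m : ℕ} (x : Fin m → ℝ) (n : ℕ) (ρ : Fin m → ℕ)
    (j : Fin m) : ℝ :=
  dterm τ₁ τ₂ x (n + 1) ρ *
    (τ₁ ^ (∑ i ∈ univ.filter (fun i : Fin m => (i : ℕ) < (j : ℕ)), (ρ i : ℝ)) *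
      τ₂ ^ (∑ i ∈ univ.filter (fun i : Fin m => (j : ℕ) < (i : ℕ)), (ρ i : ℝ)) *
      dnum τ₁ τ₂ ((ρ j : ℝ))) / dnum τ₁ τ₂ ((n : ℝ) + 1)

lemma key1 {τ₁ τ₂ : ℝ} (h2 : 0 < τ₂) (h : τ₂ < τ₁) {m : ℕ} (x : Fin m → ℝ) (n : ℕ)
    (ρ : Fin m → ℕ) (j : Fin m) :
    hterm τ₁ τ₂ x n (inc j ρ) j = fterm τ₁ τ₂ x n ρ j := by
  have h1 : (0 : ℝ) < τ₁ := lt_trans h2 h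
  have hE : ∑ i ∈ univ.filter (fun i : Fin m => (i : ℕ) < (j : ℕ)), ((inc j ρ) i : ℝ) =
      ∑ i ∈ univ.filter (fun i : Fin m => (i : ℕ) < (j : ℕ)), (ρ i : ℝ) := by
    refine Finset.sum_congr rfl fun i hi => ?_
    simp only [Finset.mem_filter, Finset.mem_univ, true_and] at hi
    rw [inc_apply_ne j ρ (by intro he; rw [he] at hi; omega)]
  have hF : ∑ i ∈ univ.filter (fun i : Fin m => (j : ℕ) < (i : ℕ)), ((inc j ρ) i : ℝ) =
      (Tn ρ j : ℝ) := by
    unfold Tn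
    rw [Nat.cast_sum]
    refine Finset.sum_congr rfl fun i hi => ?_
    simp only [Finset.mem_filter, Finset.mem_univ, true_and] at hi
    rw [inc_apply_ne j ρ (by intro he; rw [he] at hi; omega)]
  have hrj : (((inc j ρ) j : ℕ) : ℝ) = (ρ j : ℝ) + 1 := by
    rw [inc_apply_self]; push_cast; ring
  have hprodfac : ∏ i, dfac τ₁ τ₂ ((inc j ρ) i) =
      dnum τ₁ τ₂ ((ρ j : ℝ) + 1) * ∏ i, dfac τ₁ τ₂ (ρ i) := by
    unfold inc
    rw [Finset.prod_congr rfl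
          (fun i _ => Function.apply_update (fun _ v => dfac τ₁ τ₂ v) ρ j (ρ j + 1) i),
        Finset.prod_update_of_mem (Finset.mem_univ j), dfac_succ,
        ← Finset.mul_prod_erase univ (fun i => dfac τ₁ τ₂ (ρ i)) (Finset.mem_univ j),
        Finset.sdiff_singleton_eq_erase]
    ring
  have hprodfall : ∏ i, dfall τ₁ τ₂ (x i) ((inc j ρ) i) =
      dnum τ₁ τ₂ (x j - (ρ j : ℝ)) * ∏ i, dfall τ₁ τ₂ (x i) (ρ i) := by
    unfold inc
    rw [Finset.prod_congr rfl
          (fun i _ => Function.apply_update (fun i v => dfall τ₁ τ₂ (x i) v) ρ j (ρ j + 1) i),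
        Finset.prod_update_of_mem (Finset.mem_univ j), dfall_succ,
        ← Finset.mul_prod_erase univ (fun i => dfall τ₁ τ₂ (x i) (ρ i)) (Finset.mem_univ j),
        Finset.sdiff_singleton_eq_erase]
    ring
  have hd1 : dnum τ₁ τ₂ ((n : ℝ) + 1) ≠ 0 := ne_of_gt (dnum_pos h2 h (by positivity))
  have hd2 : dnum τ₁ τ₂ ((ρ j : ℝ) + 1) ≠ 0 := ne_of_gt (dnum_pos h2 h (by positivity))
  have hd3 : (∏ i, dfac τ₁ τ₂ (ρ i)) ≠ 0 :=
    ne_of_gt (Finset.prod_pos fun i _ => dfac_pos h2 h _)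
  unfold hterm fterm dterm
  rw [hE, hF, hrj, hprodfac, hprodfall, Aexp_inc, Bexp_inc, dfac_succ]
  rw [sub_eq_add_neg (Aexp x ρ + (Zx x j - (Tn ρ j : ℝ))),
      sub_eq_add_neg (Bexp x ρ + _)]
  simp only [Real.rpow_add h1, Real.rpow_add h2, Real.rpow_neg (le_of_lt h1),
    Real.rpow_neg (le_of_lt h2), Real.rpow_sub h1, Real.rpow_sub h2]
  have hp1 : (0:ℝ) < τ₁ ^ (∑ i ∈ univ.filter (fun i : Fin m => (i : ℕ) < (j : ℕ)), (ρ i : ℝ)) :=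
    Real.rpow_pos_of_pos h1 _
  have hp2 : (0:ℝ) < τ₂ ^ ((Tn ρ j : ℝ)) := Real.rpow_pos_of_pos h2 _
  have hp3 : (0:ℝ) < τ₁ ^ ((Tn ρ j : ℝ)) := Real.rpow_pos_of_pos h1 _
  field_simp

lemma key2 {τ₁ τ₂ : ℝ} (h2 : 0 < τ₂) (h : τ₂ < τ₁) {m : ℕ} (x : Fin m → ℝ) (n : ℕ)
    (ρ : Fin m → ℕ) (hρ : ∑ i, ρ i = n + 1) :
    ∑ j, hterm τ₁ τ₂ x n ρ j = dterm τ₁ τ₂ x (n + 1) ρ := by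
  have h1 : (0 : ℝ) < τ₁ := lt_trans h2 h
  unfold hterm
  rw [← Finset.sum_div, ← Finset.mul_sum,
      ← multiadd_fin' h1 h2 m (fun i => (ρ i : ℝ))]
  have hs : ∑ i, (ρ i : ℝ) = (n : ℝ) + 1 := by
    rw [← Nat.cast_sum, hρ]; push_cast; ring
  rw [hs, mul_div_assoc,
      div_self (ne_of_gt (dnum_pos h2 h (by positivity : (0:ℝ) < (n:ℝ)+1))), mul_one]

lemma key3 {τ₁ τ₂ : ℝ} (h2 : 0 < τ₂) (h : τ₂ < τ₁) {m : ℕ} (x : Fin m → ℝ) (n : ℕ)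
    (ρ : Fin m → ℕ) (hρ : ∑ i, ρ i = n) :
    dterm τ₁ τ₂ x n ρ * dnum τ₁ τ₂ ((∑ i, x i) - (n : ℝ)) = ∑ j, fterm τ₁ τ₂ x n ρ j := by
  have h1 : (0 : ℝ) < τ₁ := lt_trans h2 h
  have hX : (∑ i, x i) - (n : ℝ) = ∑ i, (x i - (ρ i : ℝ)) := by
    rw [Finset.sum_sub_distrib, ← Nat.cast_sum, hρ]
  rw [hX, multiadd_fin h1 h2 m (fun i => x i - (ρ i : ℝ)), Finset.mul_sum]
  refine Finset.sum_congr rfl fun j _ => ?_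
  unfold fterm
  congr 2
  unfold Zx Tn
  rw [Nat.cast_sum, ← Finset.sum_sub_distrib]

def dec {m : ℕ} (j : Fin m) (ρ : Fin m → ℕ) : Fin m → ℕ := Function.update ρ j (ρ j - 1)

lemma dec_inc {m : ℕ} (j : Fin m) (ρ : Fin m → ℕ) : dec j (inc j ρ) = ρ := by
  unfold dec inc
  simp [Function.update_idem]

lemma inc_dec {m : ℕ} (j : Fin m) (ρ : Fin m → ℕ) (h : ρ j ≠ 0) : inc j (dec j ρ) = ρ := by
  unfold dec inc
  simp only [Function.update_self, Function.update_idem]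
  rw [Nat.sub_add_cancel (Nat.one_le_iff_ne_zero.mpr h), Function.update_eq_self]

lemma sum_dec {m : ℕ} (j : Fin m) (ρ : Fin m → ℕ) (h : ρ j ≠ 0) :
    ∑ i, dec j ρ i = (∑ i, ρ i) - 1 := by
  have := sum_inc j (dec j ρ)
  rw [inc_dec j ρ h] at this
  omega

lemma sum_over_succ {τ₁ τ₂ : ℝ} (h2 : 0 < τ₂) (h : τ₂ < τ₁) {m : ℕ} (x : Fin m → ℝ)
    (n : ℕ) (j : Fin m) :
    ∑ ρ ∈ Finset.Nat.antidiagonalTuple m n, hterm τ₁ τ₂ x n (inc j ρ) j =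
      ∑ ρ' ∈ Finset.Nat.antidiagonalTuple m (n + 1), hterm τ₁ τ₂ x n ρ' j := by
  have hfil : ∑ ρ' ∈ (Finset.Nat.antidiagonalTuple m (n + 1)).filter
      (fun ρ' : Fin m → ℕ => ρ' j ≠ 0), hterm τ₁ τ₂ x n ρ' j =
      ∑ ρ' ∈ Finset.Nat.antidiagonalTuple m (n + 1), hterm τ₁ τ₂ x n ρ' j := by
    refine Finset.sum_filter_of_ne fun ρ' _ hne => ?_
    intro hzero
    apply hne
    simp [hterm, hzero, dnum_zero]
  rw [← hfil]
  refine Finset.sum_nbij' (i := inc j) (j := dec j) ?_ ?_ ?_ ?_ ?_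
  · intro ρ hρ
    rw [Finset.Nat.mem_antidiagonalTuple] at hρ
    simp only [Finset.mem_filter, Finset.Nat.mem_antidiagonalTuple]
    exact ⟨by rw [sum_inc, hρ], by rw [inc_apply_self]; omega⟩
  · intro ρ' hρ'
    simp only [Finset.mem_filter, Finset.Nat.mem_antidiagonalTuple] at hρ'
    rw [Finset.Nat.mem_antidiagonalTuple, sum_dec j ρ' hρ'.2, hρ'.1]
    omega
  · intro ρ _; exact dec_inc j ρ
  · intro ρ' hρ'
    simp only [Finset.mem_filter] at hρ'
    exact inc_dec j ρ' hρ'.2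
  · intro ρ _; rfl

theorem AUX {τ₁ τ₂ : ℝ} (h2 : 0 < τ₂) (h : τ₂ < τ₁) (m : ℕ) (x : Fin m → ℝ) (n : ℕ) :
    dfall τ₁ τ₂ (∑ i, x i) n =
      ∑ ρ ∈ Finset.Nat.antidiagonalTuple m n, dterm τ₁ τ₂ x n ρ := by
  have h1 : (0 : ℝ) < τ₁ := lt_trans h2 h
  induction n with
  | zero =>
      rw [Finset.Nat.antidiagonalTuple_zero_right, Finset.sum_singleton]
      simp [dterm, dfac, dfall, Aexp, Bexp, Tn]
  | succ n ih =>
      rw [dfall_succ, ih, Finset.sum_mul]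
      calc ∑ ρ ∈ Finset.Nat.antidiagonalTuple m n,
              dterm τ₁ τ₂ x n ρ * dnum τ₁ τ₂ ((∑ i, x i) - (n : ℝ))
          = ∑ ρ ∈ Finset.Nat.antidiagonalTuple m n, ∑ j, fterm τ₁ τ₂ x n ρ j := by
            refine Finset.sum_congr rfl fun ρ hρ => ?_
            rw [Finset.Nat.mem_antidiagonalTuple] at hρ
            exact key3 h2 h x n ρ hρ
        _ = ∑ j, ∑ ρ ∈ Finset.Nat.antidiagonalTuple m n, fterm τ₁ τ₂ x n ρ j :=
            Finset.sum_comm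
        _ = ∑ j, ∑ ρ ∈ Finset.Nat.antidiagonalTuple m n, hterm τ₁ τ₂ x n (inc j ρ) j := by
            refine Finset.sum_congr rfl fun j _ => Finset.sum_congr rfl fun ρ _ => ?_
            rw [key1 h2 h]
        _ = ∑ j, ∑ ρ' ∈ Finset.Nat.antidiagonalTuple m (n + 1), hterm τ₁ τ₂ x n ρ' j := by
            refine Finset.sum_congr rfl fun j _ => sum_over_succ h2 h x n j
        _ = ∑ ρ' ∈ Finset.Nat.antidiagonalTuple m (n + 1), ∑ j, hterm τ₁ τ₂ x n ρ' j :=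
            Finset.sum_comm
        _ = ∑ ρ' ∈ Finset.Nat.antidiagonalTuple m (n + 1), dterm τ₁ τ₂ x (n + 1) ρ' := by
            refine Finset.sum_congr rfl fun ρ' hρ' => ?_
            rw [Finset.Nat.mem_antidiagonalTuple] at hρ'
            exact key2 h2 h x n ρ' hρ'

lemma Zx_last {k : ℕ} (x : Fin (k+1) → ℝ) : Zx x (Fin.last k) = 0 := by
  unfold Zx
  rw [Finset.filter_false_of_mem, Finset.sum_empty]
  intro i _
  simp only [Fin.val_last]
  omega

lemma Tn_last {k : ℕ} (ρ : Fin (k+1) → ℕ) : Tn ρ (Fin.last k) = 0 := by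
  unfold Tn
  rw [Finset.filter_false_of_mem, Finset.sum_empty]
  intro i _
  simp only [Fin.val_last]
  omega

lemma sum_Iic_add_Tn {k n : ℕ} (r : Fin k → ℕ) (hs : ∑ i, r i ≤ n) (j : Fin k) :
    (∑ i ∈ Finset.Iic j, r i) +
      Tn (Fin.snoc r (n - ∑ i, r i) : Fin (k+1) → ℕ) j.castSucc = n := by
  set ρ : Fin (k+1) → ℕ := Fin.snoc r (n - ∑ i, r i) with hρdef
  have hρsum : ∑ i, ρ i = n := by
    rw [Fin.sum_univ_castSucc]
    simp only [hρdef, Fin.snoc_castSucc, Fin.snoc_last]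
    omega
  have hsplit := Finset.sum_filter_add_sum_filter_not univ
    (fun i : Fin (k+1) => ((j.castSucc : ℕ) < (i : ℕ))) ρ
  rw [hρsum] at hsplit
  have hIic : ∑ i ∈ Finset.Iic j, r i =
      ∑ i ∈ univ.filter (fun i : Fin (k+1) => ¬ ((j.castSucc : ℕ) < (i : ℕ))), ρ i := by
    rw [filt_split k ρ (fun t => ¬ ((j.castSucc : ℕ) < t))]
    have hjk : (j.castSucc : ℕ) < k := j.isLt
    rw [if_neg (by omega), add_zero]
    have hIic2 : Finset.Iic j = univ.filter (fun i : Fin k => ¬ ((j.castSucc : ℕ) < (i : ℕ))) := by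
      ext i
      simp only [Finset.mem_Iic, Finset.mem_filter, Finset.mem_univ, true_and, Fin.le_def,
        Fin.coe_castSucc, not_lt]
    rw [hIic2]
    refine Finset.sum_congr rfl fun i _ => ?_
    simp [hρdef, Fin.snoc_castSucc]
  unfold Tn
  omega

/-- Multivariate deformed Vandermonde formula:
`[x₁+⋯+x_{k+1}]_n = Σ M(n; r₁,…,r_k) τ₁^{Σ_j r_j(z_j−(n−s_j))}
  τ₂^{Σ_j (n−s_j)(x_j−r_j)} Π_j [x_j]_{r_j}`,
summed over tuples `(r₁,…,r_k)` with `r₁+⋯+r_k ≤ n`, where `s_j = r₁+⋯+r_j`,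
`r_{k+1} = n − s_k` and `z_j = x_{j+1}+⋯+x_{k+1}`. -/
theorem deformed_multivariate_vandermonde
    (τ₁ τ₂ : ℝ) (hτ₂ : 0 < τ₂) (hττ : τ₂ < τ₁)
    (n k : ℕ) (hk : 1 ≤ k) (x : Fin (k + 1) → ℝ) :
    dfall τ₁ τ₂ (∑ i, x i) n =
      ∑ r ∈ (Fintype.piFinset fun _ : Fin k => Finset.range (n + 1)).filter
          (fun r => ∑ j, r j ≤ n),
        dmulti τ₁ τ₂ (n : ℝ) r *
          τ₁ ^ (∑ j : Fin k, (r j : ℝ) *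
              ((∑ i ∈ Finset.univ.filter fun i : Fin (k + 1) => (j : ℕ) < (i : ℕ), x i) -
                ((n : ℝ) - ((∑ i ∈ Finset.Iic j, r i : ℕ) : ℝ)))) *
          τ₂ ^ (∑ j : Fin k, ((n : ℝ) - ((∑ i ∈ Finset.Iic j, r i : ℕ) : ℝ)) *
              (x j.castSucc - (r j : ℝ))) *
          ∏ j : Fin (k + 1), dfall τ₁ τ₂ (x j) ((Fin.snoc r (n - ∑ i, r i) : Fin (k + 1) → ℕ) j) := by
  have h1 : (0 : ℝ) < τ₁ := lt_trans hτ₂ hττ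
  rw [AUX hτ₂ hττ (k + 1) x n]
  refine Eq.symm (Finset.sum_nbij'
    (i := fun r => (Fin.snoc r (n - ∑ i, r i) : Fin (k + 1) → ℕ))
    (j := fun ρ (i : Fin k) => ρ i.castSucc) ?_ ?_ ?_ ?_ ?_)
  · -- membership forward
    intro r hr
    simp only [Finset.mem_filter] at hr
    rw [Finset.Nat.mem_antidiagonalTuple, Fin.sum_univ_castSucc]
    simp only [Fin.snoc_castSucc, Fin.snoc_last]
    omega
  · -- membership backward
    intro ρ hρ
    rw [Finset.Nat.mem_antidiagonalTuple] at hρ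
    have hsum : ∑ i : Fin k, ρ i.castSucc + ρ (Fin.last k) = n := by
      rw [← Fin.sum_univ_castSucc, hρ]
    simp only [Finset.mem_filter, Fintype.mem_piFinset, Finset.mem_range]
    constructor
    · intro i
      have : ρ i.castSucc ≤ ∑ i : Fin k, ρ i.castSucc :=
        Finset.single_le_sum (f := fun i : Fin k => ρ i.castSucc)
          (fun _ _ => Nat.zero_le _) (Finset.mem_univ i)
      omega
    · omega
  · -- left inverse
    intro r _
    funext i
    simp [Fin.snoc_castSucc]
  · -- right inverse
    intro ρ hρ
    rw [Finset.Nat.mem_antidiagonalTuple] at hρ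
    have hsum : ∑ i : Fin k, ρ i.castSucc + ρ (Fin.last k) = n := by
      rw [← Fin.sum_univ_castSucc, hρ]
    have hlast : n - ∑ i : Fin k, ρ i.castSucc = ρ (Fin.last k) := by omega
    show (Fin.snoc (fun i : Fin k => ρ i.castSucc) (n - ∑ i : Fin k, ρ i.castSucc) :
      Fin (k + 1) → ℕ) = ρ
    rw [hlast]
    exact Fin.snoc_init_self ρ
  · -- value equality
    intro r hr
    simp only [Finset.mem_filter] at hr
    obtain ⟨-, hs⟩ := hr
    set ρ : Fin (k + 1) → ℕ := Fin.snoc r (n - ∑ i, r i) with hρdef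
    have hcs : ∀ j : Fin k, ρ j.castSucc = r j := fun j => by
      simp [hρdef, Fin.snoc_castSucc]
    have hTn : ∀ j : Fin k, (Tn ρ j.castSucc : ℝ) = (n : ℝ) - ((∑ i ∈ Finset.Iic j, r i : ℕ) : ℝ) := by
      intro j
      have := sum_Iic_add_Tn r hs j
      rw [← hρdef] at this
      push_cast [← this]
      ring
    have ha : dmulti τ₁ τ₂ (n : ℝ) r = dfac τ₁ τ₂ n / ∏ j, dfac τ₁ τ₂ (ρ j) := by
      unfold dmulti
      have hfall : dfall τ₁ τ₂ (n : ℝ) (∑ j, r j) =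
          dfac τ₁ τ₂ n / dfac τ₁ τ₂ (n - ∑ j, r j) := by
        rw [dfac_eq_dfall n (∑ j, r j) hs]
        rw [mul_comm, mul_div_assoc, div_self (ne_of_gt (dfac_pos hτ₂ hττ _)), mul_one]
      rw [hfall]
      have hprod : ∏ j, dfac τ₁ τ₂ (ρ j) =
          (∏ j : Fin k, dfac τ₁ τ₂ (r j)) * dfac τ₁ τ₂ (n - ∑ j, r j) := by
        rw [Fin.prod_univ_castSucc]
        simp [hρdef, Fin.snoc_castSucc, Fin.snoc_last]
      rw [hprod]
      field_simp
    have hb : Aexp x ρ = ∑ j : Fin k, (r j : ℝ) *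
        ((∑ i ∈ Finset.univ.filter fun i : Fin (k + 1) => (j : ℕ) < (i : ℕ), x i) -
          ((n : ℝ) - ((∑ i ∈ Finset.Iic j, r i : ℕ) : ℝ))) := by
      unfold Aexp
      rw [Fin.sum_univ_castSucc]
      rw [Zx_last, Tn_last]
      simp only [Nat.cast_zero, sub_zero, mul_zero, zero_mul, add_zero, Nat.cast_ofNat]
      refine Finset.sum_congr rfl fun j _ => ?_
      rw [hcs j, hTn j]
      congr 2
    have hc : Bexp x ρ = ∑ j : Fin k, ((n : ℝ) - ((∑ i ∈ Finset.Iic j, r i : ℕ) : ℝ)) *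
        (x j.castSucc - (r j : ℝ)) := by
      unfold Bexp
      rw [Fin.sum_univ_castSucc, Tn_last]
      simp only [Nat.cast_zero, zero_mul, add_zero]
      refine Finset.sum_congr rfl fun j _ => ?_
      rw [hcs j, hTn j]
    unfold dterm
    rw [ha, hb, hc]
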